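/- For real s, t with |s| + |t| < 2, the first partial derivatives of the entropy function ent(s,t) = (1/π)(L(πp_a)+L(πp_b)+L(πp_c)+L(πp_d)) are given by ent_s(s,t) = -(1/4)·log( sin(πp_d)/sin(πp_c) ) and ent_t(s,t) = -(1/4)·log( sin(πp_a)/sin(πp_b) ). -/

import Mathlib

set_option maxHeartbeats 1000000

open Real

/-- The asymptotic probability `p_a` of an `a`-edge, for tilt `(s, t)`. -/
noncomputable def pA (s t : ℝ) : ℝ :=
  t / 4 + (1 / (2 * π)) * arccos ((cos (π * t / 2) - cos (π * s / 2)) / 2)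

/-- The asymptotic probability `p_b` of a `b`-edge, for tilt `(s, t)`. -/
noncomputable def pB (s t : ℝ) : ℝ :=
  -t / 4 + (1 / (2 * π)) * arccos ((cos (π * t / 2) - cos (π * s / 2)) / 2)

/-- The asymptotic probability `p_c` of a `c`-edge, for tilt `(s, t)`. -/
noncomputable def pC (s t : ℝ) : ℝ :=
  -s / 4 + (1 / (2 * π)) * arccos ((cos (π * s / 2) - cos (π * t / 2)) / 2)

/-- The asymptotic probability `p_d` of a `d`-edge, for tilt `(s, t)`. -/
noncomputable def pD (s t : ℝ) : ℝ :=
  s / 4 + (1 / (2 * π)) * arccos ((cos (π * s / 2) - cos (π * t / 2)) / 2)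

/-- The Lobachevsky function `L(z) = -∫₀^z log|2 sin u| du`. -/
noncomputable def Lob (z : ℝ) : ℝ := -∫ u in (0 : ℝ)..z, Real.log |2 * Real.sin u|

/-- The local entropy as a function of the tilt `(s, t)`:
`ent(s,t) = (1/π)(L(πp_a) + L(πp_b) + L(πp_c) + L(πp_d))`. -/
noncomputable def ent (s t : ℝ) : ℝ :=
  (1 / π) * (Lob (π * pA s t) + Lob (π * pB s t) +
    Lob (π * pC s t) + Lob (π * pD s t))

open MeasureTheory in
lemma intInt_log_zero {z : ℝ} (hz : 0 < z) :
    IntervalIntegrable Real.log volume 0 z := by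
  rw [intervalIntegrable_iff_integrableOn_Ioc_of_le hz.le]
  have hg : IntegrableOn (fun u : ℝ => 2 * u ^ (-(1/2) : ℝ) + |Real.log z|) (Set.Ioc 0 z) volume := by
    have h1 : IntervalIntegrable (fun u : ℝ => u ^ (-(1/2) : ℝ)) volume 0 z :=
      intervalIntegral.intervalIntegrable_rpow' (by norm_num)
    have := (h1.const_mul 2).add (_root_.intervalIntegrable_const (c := |Real.log z|))
    rwa [intervalIntegrable_iff_integrableOn_Ioc_of_le hz.le] at this
  refine hg.integrable.mono ?_ ?_
  · exact Real.measurable_log.aestronglyMeasurable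
  · filter_upwards [ae_restrict_mem measurableSet_Ioc] with u hu
    have hu0 : (0:ℝ) < u := hu.1
    have hru : (0:ℝ) < u ^ (-(1/2) : ℝ) := Real.rpow_pos_of_pos hu0 _
    have key : |Real.log u| ≤ 2 * u ^ (-(1/2) : ℝ) + |Real.log z| := by
      rcases le_or_gt u 1 with h1 | h1
      · have hlogle : Real.log u ≤ 0 := Real.log_nonpos hu0.le h1
        have : -Real.log u = 2 * Real.log (u ^ (-(1/2) : ℝ)) := by
          rw [Real.log_rpow hu0]; ring
        have hle : Real.log (u ^ (-(1/2) : ℝ)) ≤ u ^ (-(1/2) : ℝ) - 1 :=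
          Real.log_le_sub_one_of_pos hru
        rw [abs_of_nonpos hlogle]
        calc -Real.log u = 2 * Real.log (u ^ (-(1/2) : ℝ)) := this
        _ ≤ 2 * (u ^ (-(1/2) : ℝ) - 1) := by linarith
        _ ≤ 2 * u ^ (-(1/2) : ℝ) + |Real.log z| := by
            have := abs_nonneg (Real.log z); linarith
      · have : Real.log u ≤ Real.log z := Real.log_le_log hu0 hu.2
        have h0 : 0 ≤ Real.log u := Real.log_nonneg h1.le
        rw [abs_of_nonneg h0]
        have : Real.log u ≤ |Real.log z| := this.trans (le_abs_self _)
        nlinarith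
    calc ‖Real.log u‖ = |Real.log u| := rfl
    _ ≤ 2 * u ^ (-(1/2) : ℝ) + |Real.log z| := key
    _ ≤ ‖2 * u ^ (-(1/2) : ℝ) + |Real.log z|‖ := le_abs_self _

lemma sin_lower {z u : ℝ} (hz0 : 0 < z) (hzπ : z < π) (hu : u ∈ Set.Ioc 0 z) :
    u / z * Real.sin z ≤ Real.sin u := by
  have hd1 : u / z ≤ 1 := (div_le_one hz0).2 hu.2
  have hd0 : 0 ≤ u / z := div_nonneg hu.1.le hz0.le
  have h := strictConcaveOn_sin_Icc.concaveOn.2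
    (show (0:ℝ) ∈ Set.Icc 0 π from ⟨le_rfl, Real.pi_pos.le⟩)
    (show z ∈ Set.Icc 0 π from ⟨hz0.le, hzπ.le⟩)
    (show 0 ≤ 1 - u / z by linarith) hd0 (by ring)
  have he : (1 - u / z) • (0:ℝ) + (u / z) • z = u := by
    field_simp
    rw [smul_zero, zero_add, smul_eq_mul, div_mul_cancel₀ u hz0.ne']
  rw [he] at h
  simpa using h

open MeasureTheory in
lemma intInt_logsin {z : ℝ} (hz0 : 0 < z) (hzπ : z < π) :
    IntervalIntegrable (fun u => Real.log |2 * Real.sin u|) volume 0 z := by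
  rw [intervalIntegrable_iff_integrableOn_Ioc_of_le hz0.le]
  set c : ℝ := Real.sin z / z with hc
  have hsz : 0 < Real.sin z := Real.sin_pos_of_pos_of_lt_pi hz0 hzπ
  have hcpos : 0 < c := by positivity
  have hg : IntegrableOn (fun u : ℝ => |Real.log u| + (|Real.log c| + Real.log 2))
      (Set.Ioc 0 z) volume := by
    have := (intInt_log_zero hz0).norm.add
      (_root_.intervalIntegrable_const (c := |Real.log c| + Real.log 2))
    rw [intervalIntegrable_iff_integrableOn_Ioc_of_le hz0.le] at this
    simpa using this
  refine hg.integrable.mono ?_ ?_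
  · exact (Real.measurable_log.comp ((Real.measurable_sin.const_mul 2).abs)).aestronglyMeasurable
  · filter_upwards [ae_restrict_mem measurableSet_Ioc] with u hu
    have hu0 : (0:ℝ) < u := hu.1
    have hsu : 0 < Real.sin u := Real.sin_pos_of_pos_of_lt_pi hu0 (lt_of_le_of_lt hu.2 hzπ)
    have hlow : c * u ≤ Real.sin u := by
      have := sin_lower hz0 hzπ hu
      calc c * u = u / z * Real.sin z := by rw [hc]; ring
      _ ≤ Real.sin u := this
    have hup : Real.sin u ≤ u := Real.sin_le hu0.le
    have habs : |2 * Real.sin u| = 2 * Real.sin u := abs_of_pos (by linarith)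
    have heq : Real.log |2 * Real.sin u| = Real.log 2 + Real.log (Real.sin u) := by
      rw [habs, Real.log_mul (by norm_num) hsu.ne']
    have h1 : Real.log (Real.sin u) ≤ Real.log u := Real.log_le_log hsu hup
    have h2 : Real.log c + Real.log u ≤ Real.log (Real.sin u) := by
      rw [← Real.log_mul hcpos.ne' hu0.ne']
      exact Real.log_le_log (by positivity) hlow
    have hb1 : Real.log u ≤ |Real.log u| := le_abs_self _
    have hb2 : -|Real.log u| ≤ Real.log u := neg_abs_le _
    have hb3 : -|Real.log c| ≤ Real.log c := neg_abs_le _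
    have hlog2 : (0:ℝ) ≤ Real.log 2 := Real.log_nonneg (by norm_num)
    have key : |Real.log (|2 * Real.sin u|)| ≤ |Real.log u| + (|Real.log c| + Real.log 2) := by
      rw [abs_le]
      constructor
      · rw [heq]; nlinarith
      · rw [heq]; nlinarith
    calc ‖Real.log (|2 * Real.sin u|)‖ = |Real.log (|2 * Real.sin u|)| := rfl
    _ ≤ |Real.log u| + (|Real.log c| + Real.log 2) := key
    _ ≤ ‖|Real.log u| + (|Real.log c| + Real.log 2)‖ := le_abs_self _

open MeasureTheory in
lemma lob_hasDerivAt {z : ℝ} (hz0 : 0 < z) (hzπ : z < π) :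
    HasDerivAt Lob (-Real.log |2 * Real.sin z|) z := by
  have hsz : 0 < Real.sin z := Real.sin_pos_of_pos_of_lt_pi hz0 hzπ
  have hcont : ContinuousAt (fun u => Real.log |2 * Real.sin u|) z := by
    apply Real.continuousAt_log (by simp [abs_ne_zero]; exact hsz.ne') |>.comp
    exact (continuous_abs.comp (continuous_const.mul Real.continuous_sin)).continuousAt
  exact (intervalIntegral.integral_hasDerivAt_right (intInt_logsin hz0 hzπ)
    ((Real.measurable_log.comp
      ((Real.measurable_sin.const_mul 2).abs)).stronglyMeasurable.stronglyMeasurableAtFilter)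
    hcont).neg

lemma neg_one_lt_cos' {θ : ℝ} (h : |θ| < π) : -1 < Real.cos θ := by
  have h' := abs_lt.1 h
  have hc : 0 < Real.cos (θ / 2) :=
    Real.cos_pos_of_mem_Ioo ⟨by linarith, by linarith⟩
  have hsq := Real.cos_sq (θ / 2)
  have : 2 * (θ/2) = θ := by ring
  rw [this] at hsq
  nlinarith

lemma C_pos {s t : ℝ} (h : |s| + |t| < 2) :
    0 < Real.cos (π * s / 2) + Real.cos (π * t / 2) := by
  have hπ := Real.pi_pos
  rw [Real.cos_add_cos]
  have h1 : 0 < Real.cos ((π * s / 2 + π * t / 2) / 2) := by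
    apply Real.cos_pos_of_mem_Ioo
    constructor
    · have : -(|s| + |t|) ≤ s + t := by
        have := neg_abs_le s; have := neg_abs_le t; linarith
      rw [show (π * s / 2 + π * t / 2) / 2 = π * ((s + t)/4) by ring]
      rw [show -(π/2) = π * (-(2:ℝ)/4) by ring]
      apply mul_lt_mul_of_pos_left _ hπ
      linarith
    · have : s + t ≤ |s| + |t| := by
        have := le_abs_self s; have := le_abs_self t; linarith
      rw [show (π * s / 2 + π * t / 2) / 2 = π * ((s + t)/4) by ring]
      rw [show (π/2 : ℝ) = π * ((2:ℝ)/4) by ring]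
      apply mul_lt_mul_of_pos_left _ hπ
      linarith
  have h2 : 0 < Real.cos ((π * s / 2 - π * t / 2) / 2) := by
    apply Real.cos_pos_of_mem_Ioo
    constructor
    · have : -(|s| + |t|) ≤ s - t := by
        have := neg_abs_le s; have := neg_abs_le (-t); rw [abs_neg] at this; linarith
      rw [show (π * s / 2 - π * t / 2) / 2 = π * ((s - t)/4) by ring]
      rw [show -(π/2) = π * (-(2:ℝ)/4) by ring]
      apply mul_lt_mul_of_pos_left _ hπ
      linarith
    · have : s - t ≤ |s| + |t| := by
        have := le_abs_self s; have := le_abs_self (-t); rw [abs_neg] at this; linarith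
      rw [show (π * s / 2 - π * t / 2) / 2 = π * ((s - t)/4) by ring]
      rw [show (π/2 : ℝ) = π * ((2:ℝ)/4) by ring]
      apply mul_lt_mul_of_pos_left _ hπ
      linarith
  positivity

lemma x_abs_lt_one {s t : ℝ} (hs : |s| < 2) (ht : |t| < 2) :
    |(Real.cos (π * t / 2) - Real.cos (π * s / 2)) / 2| < 1 := by
  have hπ := Real.pi_pos
  have h1 : -1 < Real.cos (π * s / 2) := by
    apply neg_one_lt_cos'
    rw [abs_lt] at hs ⊢
    constructor <;> nlinarith [hs.1, hs.2]
  have h2 : -1 < Real.cos (π * t / 2) := by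
    apply neg_one_lt_cos'
    rw [abs_lt] at ht ⊢
    constructor <;> nlinarith [ht.1, ht.2]
  have h3 := Real.cos_le_one (π * s / 2)
  have h4 := Real.cos_le_one (π * t / 2)
  rw [abs_lt]; constructor <;> nlinarith

lemma P_bounds {a b : ℝ} (h : |a| + |b| < 2) :
    0 < b / 4 + (1 / (2 * π)) * Real.arccos ((Real.cos (π * b / 2) - Real.cos (π * a / 2)) / 2) ∧
    b / 4 + (1 / (2 * π)) * Real.arccos ((Real.cos (π * b / 2) - Real.cos (π * a / 2)) / 2) < 1 := by
  have hπ := Real.pi_pos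
  have ha : |a| < 2 := lt_of_le_of_lt (le_add_of_nonneg_right (abs_nonneg b)) h
  have hb : |b| < 2 := lt_of_le_of_lt (le_add_of_nonneg_left (abs_nonneg a)) h
  set x : ℝ := (Real.cos (π * b / 2) - Real.cos (π * a / 2)) / 2 with hxdef
  have hx : |x| < 1 := x_abs_lt_one ha hb
  have hx' := abs_lt.1 hx
  have hC : 0 < Real.cos (π * a / 2) + Real.cos (π * b / 2) := C_pos h
  have hqπ : Real.arccos x ≤ π := Real.arccos_le_pi x
  constructor
  · have hkey : Real.arccos x > π * |b| / 2 := by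
      have hmem : π * |b| / 2 ∈ Set.Icc 0 π := by
        constructor
        · positivity
        · nlinarith
      have hcosb : Real.cos (π * |b| / 2) = Real.cos (π * b / 2) := by
        rcases abs_cases b with ⟨he, _⟩ | ⟨he, _⟩
        · rw [he]
        · rw [he, show π * -b / 2 = -(π * b / 2) by ring, Real.cos_neg]
      have hxlt : x < Real.cos (π * |b| / 2) := by
        rw [hcosb, hxdef]; linarith
      have := Real.strictAntiOn_arccos
        (Set.mem_Icc.mpr ⟨by linarith, by linarith⟩)
        (Set.mem_Icc.mpr ⟨by linarith [Real.neg_one_le_cos (π * |b| / 2)],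
          by linarith [Real.cos_le_one (π * |b| / 2)]⟩) hxlt
      rwa [Real.arccos_cos hmem.1 hmem.2] at this
    have : -|b| / 4 + (1 / (2 * π)) * (π * |b| / 2) = 0 := by field_simp; ring
    have hble : -|b| ≤ b := neg_abs_le b
    have hmono : (1 / (2 * π)) * (π * |b| / 2) < (1 / (2 * π)) * Real.arccos x := by
      apply mul_lt_mul_of_pos_left hkey
      positivity
    linarith
  · have h1 : (1 / (2 * π)) * Real.arccos x ≤ 1 / 2 := by
      rw [show (1:ℝ)/2 = (1 / (2 * π)) * π by field_simp]
      apply mul_le_mul_of_nonneg_left hqπ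
      positivity
    have : b < 2 := lt_of_le_of_lt (le_abs_self b) hb
    linarith

/-- `sin(πp_a)sin(πp_b) = (cos(πs/2)+cos(πt/2))/4`. -/
lemma sin_pA_mul_sin_pB (s t : ℝ) (hx : |(Real.cos (π * t / 2) - Real.cos (π * s / 2)) / 2| ≤ 1) :
    Real.sin (π * pA s t) * Real.sin (π * pB s t) =
      (Real.cos (π * s / 2) + Real.cos (π * t / 2)) / 4 := by
  have hπ : (π : ℝ) ≠ 0 := Real.pi_ne_zero
  set x : ℝ := (Real.cos (π * t / 2) - Real.cos (π * s / 2)) / 2 with hxdef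
  have hx' := abs_le.1 hx
  have hA : π * pA s t = π * t / 4 + Real.arccos x / 2 := by
    rw [pA]; field_simp; ring
  have hB : π * pB s t = -(π * t) / 4 + Real.arccos x / 2 := by
    rw [pB]; field_simp; ring
  have hq : Real.cos (Real.arccos x) = x := Real.cos_arccos hx'.1 hx'.2
  have hc := Real.cos_sub_cos (π * t / 2) (Real.arccos x)
  rw [hq] at hc
  rw [show (π * t / 2 - Real.arccos x) / 2 = -(-(π * t) / 4 + Real.arccos x / 2) by ring,
    Real.sin_neg, show (π * t / 2 + Real.arccos x) / 2 = π * t / 4 + Real.arccos x / 2 by ring]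
    at hc
  rw [hA, hB]
  rw [hxdef] at hc
  linear_combination (-1/2) * hc

/-- Key derivative computation: the `s`-partial derivative of `ent`. -/
lemma ent_hasDerivAt_fst (s t : ℝ) (h : |s| + |t| < 2) :
    HasDerivAt (fun s' => ent s' t)
      (-(1 / 4) * Real.log (Real.sin (π * pD s t) / Real.sin (π * pC s t))) s := by
  have hπ := Real.pi_pos
  have hπ0 : (π : ℝ) ≠ 0 := Real.pi_ne_zero
  have ha : |s| < 2 := lt_of_le_of_lt (le_add_of_nonneg_right (abs_nonneg t)) h
  have hb : |t| < 2 := lt_of_le_of_lt (le_add_of_nonneg_left (abs_nonneg s)) h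
  set x : ℝ := (Real.cos (π * t / 2) - Real.cos (π * s / 2)) / 2 with hxdef
  have hx : |x| < 1 := x_abs_lt_one ha hb
  have hx' := abs_lt.1 hx
  -- probability bounds
  have hpA : 0 < pA s t ∧ pA s t < 1 := by unfold pA; exact P_bounds h
  have hpB : 0 < pB s t ∧ pB s t < 1 := by
    have h' : |s| + |-t| < 2 := by rwa [abs_neg]
    have := P_bounds (a := s) (b := -t) h'
    rw [show π * -t / 2 = -(π * t / 2) by ring, Real.cos_neg] at this
    unfold pB; exact this
  have hpD : 0 < pD s t ∧ pD s t < 1 := by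
    have h' : |t| + |s| < 2 := by rwa [add_comm]
    have := P_bounds (a := t) (b := s) h'
    unfold pD; exact this
  have hpC : 0 < pC s t ∧ pC s t < 1 := by
    have h' : |t| + |-s| < 2 := by rw [abs_neg]; rwa [add_comm]
    have := P_bounds (a := t) (b := -s) h'
    rw [show π * -s / 2 = -(π * s / 2) by ring, Real.cos_neg] at this
    unfold pC; exact this
  -- sines positive
  have hsA : 0 < Real.sin (π * pA s t) :=
    Real.sin_pos_of_pos_of_lt_pi (mul_pos hπ hpA.1) (by nlinarith [hpA.2])
  have hsB : 0 < Real.sin (π * pB s t) :=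
    Real.sin_pos_of_pos_of_lt_pi (mul_pos hπ hpB.1) (by nlinarith [hpB.2])
  have hsC : 0 < Real.sin (π * pC s t) :=
    Real.sin_pos_of_pos_of_lt_pi (mul_pos hπ hpC.1) (by nlinarith [hpC.2])
  have hsD : 0 < Real.sin (π * pD s t) :=
    Real.sin_pos_of_pos_of_lt_pi (mul_pos hπ hpD.1) (by nlinarith [hpD.2])
  -- Lob derivatives at the four points
  have hLA := lob_hasDerivAt (mul_pos hπ hpA.1) (by nlinarith [hpA.2])
  have hLB := lob_hasDerivAt (mul_pos hπ hpB.1) (by nlinarith [hpB.2])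
  have hLC := lob_hasDerivAt (mul_pos hπ hpC.1) (by nlinarith [hpC.2])
  have hLD := lob_hasDerivAt (mul_pos hπ hpD.1) (by nlinarith [hpD.2])
  -- inner derivatives
  set S : ℝ := Real.sin (π * s / 2) with hSdef
  set d1 : ℝ := -(1 / Real.sqrt (1 - x ^ 2)) * (π / 4 * S) with hd1def
  have hu : HasDerivAt (fun s' : ℝ => π * s' / 2) (π / 2) s := by
    simpa using ((hasDerivAt_id s).const_mul π).div_const 2
  have hcos : HasDerivAt (fun s' => Real.cos (π * s' / 2)) (-S * (π / 2)) s := hu.cos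
  have hx1 : HasDerivAt (fun s' => (Real.cos (π * t / 2) - Real.cos (π * s' / 2)) / 2)
      (π / 4 * S) s := by
    have := (hcos.const_sub (Real.cos (π * t / 2))).div_const 2
    exact this.congr_deriv (by ring)
  have hx2 : HasDerivAt (fun s' => (Real.cos (π * s' / 2) - Real.cos (π * t / 2)) / 2)
      (-(π / 4 * S)) s := by
    have := (hcos.sub_const (Real.cos (π * t / 2))).div_const 2
    exact this.congr_deriv (by ring)
  have harc1 := Real.hasDerivAt_arccos (x := x) (by linarith) (by linarith)
  have harc2 := Real.hasDerivAt_arccos (x := -x)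
    (by intro hcon; linarith [hx'.2])
    (by intro hcon; linarith [hx'.1])
  have hq1 : HasDerivAt (fun s' => Real.arccos ((Real.cos (π * t / 2) - Real.cos (π * s' / 2)) / 2))
      d1 s := by
    have h := harc1.comp s hx1; exact h
  have hq2 : HasDerivAt (fun s' => Real.arccos ((Real.cos (π * s' / 2) - Real.cos (π * t / 2)) / 2))
      (-d1) s := by
    have hxx : -x = (Real.cos (π * s / 2) - Real.cos (π * t / 2)) / 2 := by rw [hxdef]; ring
    rw [hxx] at harc2
    have h := (harc2.comp s hx2).congr_deriv (show _ = -d1 by rw [hd1def, ← hxx, neg_sq]; ring); exact h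
  -- derivatives of s' ↦ π * p_i s' t
  have hPA : HasDerivAt (fun s' => π * pA s' t) (π * ((1 / (2 * π)) * d1)) s := by
    unfold pA
    exact (((hq1.const_mul (1 / (2 * π))).const_add (t / 4)).const_mul π)
  have hPB : HasDerivAt (fun s' => π * pB s' t) (π * ((1 / (2 * π)) * d1)) s := by
    unfold pB
    exact (((hq1.const_mul (1 / (2 * π))).const_add (-t / 4)).const_mul π)
  have hPC : HasDerivAt (fun s' => π * pC s' t) (π * (-(1 / 4) + (1 / (2 * π)) * -d1)) s := by
    unfold pC
    have hin : HasDerivAt (fun s' : ℝ => -s' / 4 + (1 / (2 * π)) *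
        Real.arccos ((Real.cos (π * s' / 2) - Real.cos (π * t / 2)) / 2))
        (-(1 / 4) + (1 / (2 * π)) * -d1) s := by
      have h1 : HasDerivAt (fun s' : ℝ => -s' / 4) (-(1 / 4)) s := by
        exact ((hasDerivAt_id s).neg.div_const 4).congr_deriv (by norm_num)
      exact h1.add (hq2.const_mul (1 / (2 * π)))
    exact hin.const_mul π
  have hPD : HasDerivAt (fun s' => π * pD s' t) (π * ((1 / 4) + (1 / (2 * π)) * -d1)) s := by
    unfold pD
    have hin : HasDerivAt (fun s' : ℝ => s' / 4 + (1 / (2 * π)) *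
        Real.arccos ((Real.cos (π * s' / 2) - Real.cos (π * t / 2)) / 2))
        ((1 / 4) + (1 / (2 * π)) * -d1) s := by
      have h1 : HasDerivAt (fun s' : ℝ => s' / 4) (1 / 4 : ℝ) s := by
        exact ((hasDerivAt_id s).div_const 4).congr_deriv (by norm_num)
      exact h1.add (hq2.const_mul (1 / (2 * π)))
    exact hin.const_mul π
  -- compose with Lob
  have hA := hLA.comp s hPA
  have hB := hLB.comp s hPB
  have hC := hLC.comp s hPC
  have hD := hLD.comp s hPD
  have htot := (((hA.add hB).add hC).add hD).const_mul (1 / π)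
  have hfun : (fun s' => ent s' t) = fun s' =>
      1 / π * ((Lob ∘ fun s' => π * pA s' t) s' + (Lob ∘ fun s' => π * pB s' t) s' +
        (Lob ∘ fun s' => π * pC s' t) s' + (Lob ∘ fun s' => π * pD s' t) s') := by
    funext s'
    simp [ent, Function.comp]
  rw [hfun]
  refine htot.congr_deriv ?_
  symm
  -- now prove the value identity
  have habsA : |2 * Real.sin (π * pA s t)| = 2 * Real.sin (π * pA s t) := abs_of_pos (by linarith)
  have habsB : |2 * Real.sin (π * pB s t)| = 2 * Real.sin (π * pB s t) := abs_of_pos (by linarith)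
  have habsC : |2 * Real.sin (π * pC s t)| = 2 * Real.sin (π * pC s t) := abs_of_pos (by linarith)
  have habsD : |2 * Real.sin (π * pD s t)| = 2 * Real.sin (π * pD s t) := abs_of_pos (by linarith)
  rw [habsA, habsB, habsC, habsD]
  rw [Real.log_mul (by norm_num) hsA.ne', Real.log_mul (by norm_num) hsB.ne',
    Real.log_mul (by norm_num) hsC.ne', Real.log_mul (by norm_num) hsD.ne',
    Real.log_div hsD.ne' hsC.ne']
  -- sum identity : log sin πpA + log sin πpB = log sin πpC + log sin πpD
  have hprodAB : Real.sin (π * pA s t) * Real.sin (π * pB s t) =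
      (Real.cos (π * s / 2) + Real.cos (π * t / 2)) / 4 := sin_pA_mul_sin_pB s t hx.le
  have hprodCD : Real.sin (π * pC s t) * Real.sin (π * pD s t) =
      (Real.cos (π * s / 2) + Real.cos (π * t / 2)) / 4 := by
    have hx2 : |(Real.cos (π * s / 2) - Real.cos (π * t / 2)) / 2| ≤ 1 := by
      rw [show (Real.cos (π * s / 2) - Real.cos (π * t / 2)) / 2 = -((Real.cos (π * t / 2) - Real.cos (π * s / 2)) / 2) by ring, abs_neg]
      rw [← hxdef]
      exact hx.le
    have := sin_pA_mul_sin_pB t s hx2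
    have h1 : pA t s = pD s t := by unfold pA pD; ring_nf
    have h2 : pB t s = pC s t := by unfold pB pC; ring_nf
    rw [h1, h2] at this
    linear_combination this
  have hsum : Real.log (Real.sin (π * pA s t)) + Real.log (Real.sin (π * pB s t)) =
      Real.log (Real.sin (π * pC s t)) + Real.log (Real.sin (π * pD s t)) := by
    rw [← Real.log_mul hsA.ne' hsB.ne', ← Real.log_mul hsC.ne' hsD.ne', hprodAB, hprodCD]
  field_simp
  linear_combination (-(π * (Real.sqrt (1 - x ^ 2))⁻¹ * S)) * hsum

/-- The entropy is symmetric in `(s, t)`. -/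
lemma ent_symm (s t : ℝ) : ent t s = ent s t := by
  have h1 : pA t s = pD s t := by unfold pA pD; ring_nf
  have h2 : pB t s = pC s t := by unfold pB pC; ring_nf
  have h3 : pC t s = pB s t := by unfold pC pB; ring_nf
  have h4 : pD t s = pA s t := by unfold pD pA; ring_nf
  rw [ent, ent, h1, h2, h3, h4]
  ring

/-- The first partial derivatives of the local entropy `ent(s,t)` for
`|s| + |t| < 2`:
`ent_s(s,t) = -(1/4)·log(sin(πp_d)/sin(πp_c))` and
`ent_t(s,t) = -(1/4)·log(sin(πp_a)/sin(πp_b))`. -/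
theorem ent_first_derivatives (s t : ℝ) (h : |s| + |t| < 2) :
    deriv (fun s' => ent s' t) s =
      -(1 / 4) * Real.log (sin (π * pD s t) / sin (π * pC s t)) ∧
    deriv (fun t' => ent s t') t =
      -(1 / 4) * Real.log (sin (π * pA s t) / sin (π * pB s t)) := by
  constructor
  · exact (ent_hasDerivAt_fst s t h).deriv
  · have h' : |t| + |s| < 2 := by rwa [add_comm]
    have hD := ent_hasDerivAt_fst t s h'
    have h1 : pD t s = pA s t := by unfold pD pA; ring_nf
    have h2 : pC t s = pB s t := by unfold pC pB; ring_nf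
    have hfun : (fun t' => ent s t') = fun t' => ent t' s := by
      funext t'; rw [ent_symm]
    rw [hfun, hD.deriv, h1, h2]
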